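/- In every stateful proposition algebra in which a • s = s for all atoms a and states s, it holds that t • s = s for every closed conditional expression t and state s, and consequently the axioms (CPstat): (x◁y▷z)◁u▷v = (x◁u▷v)◁y▷(z◁u▷v) and (CPcontr): (x◁y▷z)◁y▷u = x◁y▷u hold for all closed terms. -/
import Mathlib


inductive CE (A : Type) : Type
  | tt : CE A
  | ff : CE A
  | atom : A → CE A
  | cond : CE A → CE A → CE A → CE A

structure SPA (A : Type) where
  C : Type
  S : Type
  tt : C
  ff : C
  atom : A → C
  cond : C → C → C → C
  scond : S → C → S → S
  rep : C → S → C
  app : C → S → S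
  cp1 : ∀ x y, cond x tt y = x
  cp2 : ∀ x y, cond x ff y = y
  cp3 : ∀ x, cond tt x ff = x
  cp4 : ∀ x y z u v, cond x (cond y z u) v = cond (cond x y v) z (cond x u v)
  ts1 : ∀ s s', scond s tt s' = s
  ts2 : ∀ s s', scond s ff s' = s'
  spa1 : ∀ s, rep tt s = tt
  spa2 : ∀ s, rep ff s = ff
  spa3 : ∀ x y z s, rep (cond x y z) s = cond (rep x (app y s)) (rep y s) (rep z (app y s))
  spa4 : ∀ s, app tt s = s
  spa5 : ∀ s, app ff s = s
  spa6 : ∀ x y z s, app (cond x y z) s = scond (app x (app y s)) (rep y s) (app z (app y s))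
  spa7 : ∀ x s, rep x s = tt ∨ rep x s = ff
  spa8 : ∀ x y, (∀ s, rep x s = rep y s ∧ app x s = app y s) → x = y

/-- Interpretation of closed conditional expressions in an SPA. -/
def interp {A : Type} (P : SPA A) : CE A → P.C
  | .tt => P.tt
  | .ff => P.ff
  | .atom a => P.atom a
  | .cond x y z => P.cond (interp P x) (interp P y) (interp P z)

/-- In an SPA where a • s = s for all atoms a, every closed conditional expression
satisfies t • s = s, and the axioms (CPstat) and (CPcontr) hold for all closed terms. -/
theorem spa_static (A : Type) (P : SPA A)
    (hA : ∀ (a : A) (s : P.S), P.app (P.atom a) s = s) :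
    (∀ (t : CE A) (s : P.S), P.app (interp P t) s = s) ∧
    (∀ x y z u v : CE A,
      interp P (.cond (.cond x y z) u v) =
        interp P (.cond (.cond x u v) y (.cond z u v))) ∧
    (∀ x y z u : CE A,
      interp P (.cond (.cond x y z) y u) = interp P (.cond x y u)) := by
  have happ : ∀ (t : CE A) (s : P.S), P.app (interp P t) s = s := by
    intro t
    induction t with
    | tt => exact P.spa4
    | ff => exact P.spa5
    | atom a => exact hA a
    | cond x y z ihx ihy ihz =>
      intro s
      rw [show interp P (.cond x y z) = P.cond (interp P x) (interp P y) (interp P z) from rfl,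
        P.spa6, ihy, ihx, ihz]
      rcases P.spa7 (interp P y) s with h | h <;> rw [h]
      · exact P.ts1 _ _
      · exact P.ts2 _ _
  have hrep : ∀ (x : P.C) (y : CE A) (z : P.C) (s : P.S),
      P.rep (P.cond x (interp P y) z) s
        = P.cond (P.rep x s) (P.rep (interp P y) s) (P.rep z s) := by
    intro x y z s
    rw [P.spa3, happ y]
  refine ⟨happ, ?_, ?_⟩
  · intro x y z u v
    apply P.spa8
    intro s
    constructor
    · show P.rep (P.cond (P.cond _ _ _) _ _) s = P.rep (P.cond (P.cond _ _ _) _ (P.cond _ _ _)) s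
      rw [hrep _ u _, hrep _ y _, hrep _ y _, hrep _ u _, hrep _ u _]
      rcases P.spa7 (interp P y) s with h | h <;> rw [h]
      · rw [P.cp1, P.cp1]
      · rw [P.cp2, P.cp2]
    · rw [happ (.cond (.cond x y z) u v), happ (.cond (.cond x u v) y (.cond z u v))]
  · intro x y z u
    apply P.spa8
    intro s
    constructor
    · show P.rep (P.cond (P.cond _ _ _) _ _) s = P.rep (P.cond _ _ _) s
      rw [hrep _ y _, hrep _ y _, hrep _ y _]
      rcases P.spa7 (interp P y) s with h | h <;> rw [h]
      · rw [P.cp1, P.cp1, P.cp1]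
      · rw [P.cp2, P.cp2]
    · rw [happ (.cond (.cond x y z) y u), happ (.cond x y u)]
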